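/- Let Γ be a group, V a finite type, F : SimpleGraph V an acyclic simple graph (a forest), and ψ : V → V → Γ a function satisfying ψ(u,w) = ψ(w,u)⁻¹ whenever u and w are adjacent in F. Then for every vertex v₀ ∈ V there exists a function η : V → Γ with η(v₀) = 1 such that η(u)⁻¹ · ψ(u,w) · η(w) = 1 for every pair of vertices u, w adjacent in F (i.e., the forest can be normalized by switching, with the switching function taking the identity value at v₀). -/

import Mathlib

section aux
variable {Γ V : Type*} [Group Γ] {F : SimpleGraph V}

/-- Gain of a walk: product of edge gains from the start. -/
def walkGain (ψ : V → V → Γ) : {a b : V} → F.Walk a b → Γ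
  | _, _, .nil => 1
  | _, _, @SimpleGraph.Walk.cons _ _ a x _ _ p => ψ a x * walkGain ψ p

@[simp] lemma walkGain_nil (ψ : V → V → Γ) {a : V} :
    walkGain ψ (SimpleGraph.Walk.nil : F.Walk a a) = 1 := rfl

@[simp] lemma walkGain_cons (ψ : V → V → Γ) {a x b : V} (h : F.Adj a x) (p : F.Walk x b) :
    walkGain ψ (SimpleGraph.Walk.cons h p) = ψ a x * walkGain ψ p := rfl

lemma walkGain_concat (ψ : V → V → Γ) {a u w : V} (p : F.Walk a u) (h : F.Adj u w) :
    walkGain ψ (p.concat h) = walkGain ψ p * ψ u w := by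
  induction p with
  | nil => simp [SimpleGraph.Walk.concat_nil]
  | cons h' p ih => simp [SimpleGraph.Walk.concat_cons, ih, mul_assoc]

lemma walkGain_copy (ψ : V → V → Γ) {a b a' b' : V} (p : F.Walk a b)
    (ha : a = a') (hb : b = b') :
    walkGain ψ (p.copy ha hb) = walkGain ψ p := by
  subst ha; subst hb; rfl

lemma isPath_concat {a u w : V} {p : F.Walk a u} (hp : p.IsPath) (h : F.Adj u w)
    (hw : w ∉ p.support) : (p.concat h).IsPath := by
  rw [SimpleGraph.Walk.isPath_def, SimpleGraph.Walk.support_concat,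
    List.nodup_append']
  rw [SimpleGraph.Walk.isPath_def] at hp
  refine ⟨hp, List.nodup_singleton w, ?_⟩
  intro x hx hx'
  simp at hx'
  subst hx'
  exact hw hx

lemma not_mem_support_takeUntil [DecidableEq V] {a u w : V} (p : F.Walk a u)
    (hp : p.IsPath) (hw : w ∈ p.support) (hne : u ≠ w) :
    u ∉ (p.takeUntil w hw).support := by
  intro hu
  have hspec := p.take_spec hw
  have hnd := hp.support_nodup
  rw [← hspec, SimpleGraph.Walk.support_append] at hnd
  have hdisj := List.disjoint_of_nodup_append hnd
  have hu' : u ∈ (p.dropUntil w hw).support.tail := by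
    have hmem : u ∈ (p.dropUntil w hw).support := SimpleGraph.Walk.end_mem_support _
    rw [SimpleGraph.Walk.support_eq_cons] at hmem
    rcases List.mem_cons.mp hmem with h | h
    · exact absurd h hne
    · exact h
  exact hdisj hu hu'

end aux

/-- Any forest of a gain graph can be normalized by switching, with the switching
function taking the identity value at any prescribed vertex `v₀`. -/
theorem normalize_forest {Γ V : Type*} [Group Γ] [Finite V]
    (F : SimpleGraph V) (hF : F.IsAcyclic) (ψ : V → V → Γ)
    (hψ : ∀ u w : V, F.Adj u w → ψ u w = (ψ w u)⁻¹) (v₀ : V) :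
    ∃ η : V → Γ, η v₀ = 1 ∧ ∀ u w : V, F.Adj u w → (η u)⁻¹ * ψ u w * η w = 1 := by
  classical
  -- root of each component, chosen to be `v₀` on the component of `v₀`
  set r : V → V := fun v =>
    if F.Reachable v₀ v then v₀ else (F.connectedComponentMk v).out with hr_def
  have hr : ∀ v, F.Reachable (r v) v := by
    intro v
    simp only [hr_def]
    split_ifs with h
    · exact h
    · exact SimpleGraph.ConnectedComponent.eq.mp (F.connectedComponentMk v).out_eq
  have hrv₀ : r v₀ = v₀ := by
    simp only [hr_def]
    rw [if_pos (SimpleGraph.Reachable.refl v₀)]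
  have hr_adj : ∀ u w : V, F.Adj u w → r u = r w := by
    intro u w h
    have hreach : F.Reachable u w := h.reachable
    simp only [hr_def]
    by_cases h1 : F.Reachable v₀ u
    · rw [if_pos h1, if_pos (h1.trans hreach)]
    · rw [if_neg h1, if_neg (fun h2 => h1 (h2.trans hreach.symm)),
        SimpleGraph.ConnectedComponent.sound hreach]
  -- the chosen path from the root
  let P : ∀ v : V, F.Path (r v) v := fun v => (hr v).some.toPath
  let η : V → Γ := fun v => (walkGain ψ (P v : F.Walk (r v) v))⁻¹
  refine ⟨η, ?_, ?_⟩
  · -- η v₀ = 1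
    have hpath : ((P v₀ : F.Walk (r v₀) v₀).copy hrv₀ rfl).IsPath :=
      (SimpleGraph.Walk.isPath_copy _ hrv₀ rfl).mpr (P v₀).2
    have hnil : ((P v₀ : F.Walk (r v₀) v₀).copy hrv₀ rfl) = SimpleGraph.Walk.nil :=
      SimpleGraph.Walk.isPath_iff_eq_nil.mp hpath
    have hg : walkGain ψ (P v₀ : F.Walk (r v₀) v₀) = 1 := by
      rw [← walkGain_copy ψ (P v₀ : F.Walk (r v₀) v₀) hrv₀ rfl, hnil, walkGain_nil]
    simp [η, hg]
  · intro u w h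
    have e : r u = r w := hr_adj u w h
    -- transport the path to `u` so both start at `r w`
    set p : F.Walk (r w) u := (P u : F.Walk (r u) u).copy e rfl with hp_def
    have hp : p.IsPath := (SimpleGraph.Walk.isPath_copy _ e rfl).mpr (P u).2
    set q : F.Walk (r w) w := (P w : F.Walk (r w) w) with hq_def
    have hq : q.IsPath := (P w).2
    have hgp : η u = (walkGain ψ p)⁻¹ := by
      simp [η, hp_def, walkGain_copy]
    have hgq : η w = (walkGain ψ q)⁻¹ := rfl
    by_cases hw : w ∈ p.support
    · -- then q = p.takeUntil w, and p = q.concat h.symm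
      have hqt : q = p.takeUntil w hw := by
        have := hF.path_unique ⟨q, hq⟩ ⟨p.takeUntil w hw, hp.takeUntil hw⟩
        exact congrArg Subtype.val this
      have hu : u ∉ q.support := by
        rw [hqt]; exact not_mem_support_takeUntil p hp hw h.ne
      have hcat : (q.concat h.symm).IsPath := isPath_concat hq h.symm hu
      have hpq : p = q.concat h.symm := by
        have := hF.path_unique ⟨p, hp⟩ ⟨q.concat h.symm, hcat⟩
        exact congrArg Subtype.val this
      have hgain : walkGain ψ p = walkGain ψ q * ψ w u := by
        rw [hpq, walkGain_concat]
      rw [hgp, hgq, hgain, hψ w u h.symm]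
      group
    · -- then q = p.concat h
      have hcat : (p.concat h).IsPath := isPath_concat hp h hw
      have hpq : q = p.concat h := by
        have := hF.path_unique ⟨q, hq⟩ ⟨p.concat h, hcat⟩
        exact congrArg Subtype.val this
      have hgain : walkGain ψ q = walkGain ψ p * ψ u w := by
        rw [hpq, walkGain_concat]
      rw [hgp, hgq, hgain]
      group
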